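/- Let ξ̄ > 0 and L > 0. Suppose g : ℝ → ℝ is Lipschitz continuous with constant L and Ū : [0,ξ̄] → ℝ is continuous and bounded. Then for any two bounded continuous functions U, V : [0,∞)×[0,ξ̄] → ℝ one has ‖𝒯U − 𝒯V‖_* ≤ (1/2)‖U − V‖_*, i.e. the transformation 𝒯 is a strict contraction with contraction constant 1/2 in the weighted norm. -/

import Mathlib

open MeasureTheory Set Real

/-- The Picard-type transformation `(𝒯U)(t,ξ) = Ū(ξ) + (1/2)∫₀^t ∫₀^ξ g(U(s,η)) dη ds`. -/
noncomputable def asympT (Ubar : ℝ → ℝ) (g : ℝ → ℝ) (W : ℝ → ℝ → ℝ) (t ξ : ℝ) : ℝ :=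
  Ubar ξ + (1 / 2) * ∫ s in (0:ℝ)..t, ∫ η in (0:ℝ)..ξ, g (W s η)

/-- The weighted norm `‖U‖_* = sup_{t ≥ 0, ξ ∈ [0,ξ̄]} e^{-Lξ̄t} |U(t,ξ)|`. -/
noncomputable def wnorm (ξbar L : ℝ) (W : ℝ → ℝ → ℝ) : ℝ :=
  sSup {r : ℝ | ∃ t ξ : ℝ, 0 ≤ t ∧ ξ ∈ Set.Icc 0 ξbar ∧
    r = Real.exp (-(L * ξbar * t)) * |W t ξ|}

/-- Tietze extension helper: extend a function continuous on a closed set of `ℝ × ℝ`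
to a globally continuous function. -/
lemma exists_cont_ext (W : ℝ × ℝ → ℝ) (s : Set (ℝ × ℝ)) (hs : IsClosed s)
    (hW : ContinuousOn W s) :
    ∃ F : ℝ × ℝ → ℝ, Continuous F ∧ ∀ p ∈ s, F p = W p := by
  obtain ⟨G, hG⟩ := ContinuousMap.exists_restrict_eq hs ⟨s.restrict W, hW.restrict⟩
  refine ⟨G, G.continuous, fun p hp => ?_⟩
  have := ContinuousMap.congr_fun hG ⟨p, hp⟩
  exact this

/-- The transformation `𝒯` is a strict contraction with constant `1/2` in the
weighted norm. -/
theorem stmt0 (ξbar L : ℝ) (hξbar : 0 < ξbar) (hL : 0 < L)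
    (g : ℝ → ℝ) (hg : ∀ u v : ℝ, |g u - g v| ≤ L * |u - v|)
    (Ubar : ℝ → ℝ) (hUbar : ContinuousOn Ubar (Set.Icc 0 ξbar))
    (hUbarBdd : ∃ M : ℝ, ∀ ξ ∈ Set.Icc (0:ℝ) ξbar, |Ubar ξ| ≤ M)
    (U V : ℝ → ℝ → ℝ)
    (hU : ContinuousOn (Function.uncurry U) (Set.Ici 0 ×ˢ Set.Icc 0 ξbar))
    (hV : ContinuousOn (Function.uncurry V) (Set.Ici 0 ×ˢ Set.Icc 0 ξbar))
    (hUbdd : ∃ M : ℝ, ∀ t ξ : ℝ, 0 ≤ t → ξ ∈ Set.Icc (0:ℝ) ξbar → |U t ξ| ≤ M)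
    (hVbdd : ∃ M : ℝ, ∀ t ξ : ℝ, 0 ≤ t → ξ ∈ Set.Icc (0:ℝ) ξbar → |V t ξ| ≤ M) :
    wnorm ξbar L (fun t ξ => asympT Ubar g U t ξ - asympT Ubar g V t ξ) ≤
      (1 / 2) * wnorm ξbar L (fun t ξ => U t ξ - V t ξ) := by
  obtain ⟨MU, hMU⟩ := hUbdd
  obtain ⟨MV, hMV⟩ := hVbdd
  -- continuity of g
  have hgc : Continuous g := by
    have : LipschitzWith L.toNNReal g := by
      apply LipschitzWith.of_dist_le_mul
      intro u v
      simpa [Real.dist_eq, Real.coe_toNNReal L hL.le] using hg u v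
    exact this.continuous
  -- the wnorm set for U - V
  set SN : Set ℝ := {r : ℝ | ∃ t ξ : ℝ, 0 ≤ t ∧ ξ ∈ Set.Icc 0 ξbar ∧
    r = Real.exp (-(L * ξbar * t)) * |U t ξ - V t ξ|} with hSN
  have hbddN : BddAbove SN := by
    refine ⟨MU + MV, fun r hr => ?_⟩
    obtain ⟨t, ξ, ht, hξ, rfl⟩ := hr
    have h1 : Real.exp (-(L * ξbar * t)) ≤ 1 := by
      apply Real.exp_le_one_iff.2
      have : 0 ≤ L * ξbar * t := by positivity
      linarith
    have h2 : |U t ξ - V t ξ| ≤ MU + MV := by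
      calc |U t ξ - V t ξ| ≤ |U t ξ| + |V t ξ| := abs_sub _ _
        _ ≤ MU + MV := add_le_add (hMU t ξ ht hξ) (hMV t ξ ht hξ)
    calc Real.exp (-(L * ξbar * t)) * |U t ξ - V t ξ|
        ≤ 1 * (MU + MV) :=
          mul_le_mul h1 h2 (abs_nonneg _) zero_le_one
      _ = MU + MV := one_mul _
  set N : ℝ := wnorm ξbar L (fun t ξ => U t ξ - V t ξ) with hNdef
  have hNset : N = sSup SN := rfl
  have hN0 : 0 ≤ N := by
    have hmem : Real.exp (-(L * ξbar * 0)) * |U 0 0 - V 0 0| ∈ SN :=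
      ⟨0, 0, le_refl 0, ⟨le_refl 0, hξbar.le⟩, rfl⟩
    have := le_csSup hbddN hmem
    have h0 : (0:ℝ) ≤ Real.exp (-(L * ξbar * 0)) * |U 0 0 - V 0 0| := by positivity
    rw [hNset]; linarith
  -- pointwise bound from the weighted norm
  have key : ∀ s' η : ℝ, 0 ≤ s' → η ∈ Set.Icc (0:ℝ) ξbar →
      |U s' η - V s' η| ≤ Real.exp (L * ξbar * s') * N := by
    intro s' η hs' hη
    have h1 : Real.exp (-(L * ξbar * s')) * |U s' η - V s' η| ≤ N := by
      rw [hNset]; exact le_csSup hbddN ⟨s', η, hs', hη, rfl⟩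
    have h2 : |U s' η - V s' η|
        = Real.exp (L * ξbar * s') * (Real.exp (-(L * ξbar * s')) * |U s' η - V s' η|) := by
      rw [← mul_assoc, ← Real.exp_add]
      simp
    rw [h2]
    exact mul_le_mul_of_nonneg_left h1 (Real.exp_nonneg _)
  -- continuous extensions of U and V
  have hSclosed : IsClosed (Set.Ici (0:ℝ) ×ˢ Set.Icc (0:ℝ) ξbar) :=
    isClosed_Ici.prod isClosed_Icc
  obtain ⟨FU, hFUc, hFU⟩ := exists_cont_ext (Function.uncurry U) _ hSclosed hU
  obtain ⟨FV, hFVc, hFV⟩ := exists_cont_ext (Function.uncurry V) _ hSclosed hV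
  -- the main pointwise estimate on the transformed functions
  have main : ∀ t ξ : ℝ, 0 ≤ t → ξ ∈ Set.Icc (0:ℝ) ξbar →
      Real.exp (-(L * ξbar * t)) * |asympT Ubar g U t ξ - asympT Ubar g V t ξ|
        ≤ (1 / 2) * N := by
    intro t ξ ht hξ
    have hξ0 : 0 ≤ ξ := hξ.1
    have hξb : ξ ≤ ξbar := hξ.2
    set fU : ℝ → ℝ := fun s' => ∫ η in (0:ℝ)..ξ, g (U s' η) with hfUdef
    set fV : ℝ → ℝ := fun s' => ∫ η in (0:ℝ)..ξ, g (V s' η) with hfVdef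
    -- interval integrability of fU, fV on [0, t] via the extensions
    have hFUint : Continuous fun s' : ℝ => ∫ η in (0:ℝ)..ξ, g (FU (s', η)) := by
      apply intervalIntegral.continuous_parametric_intervalIntegral_of_continuous'
        (f := fun s' η => g (FU (s', η)))
      exact hgc.comp hFUc
    have hFVint : Continuous fun s' : ℝ => ∫ η in (0:ℝ)..ξ, g (FV (s', η)) := by
      apply intervalIntegral.continuous_parametric_intervalIntegral_of_continuous'
        (f := fun s' η => g (FV (s', η)))
      exact hgc.comp hFVc
    have heqU : Set.EqOn fU (fun s' : ℝ => ∫ η in (0:ℝ)..ξ, g (FU (s', η)))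
        (Set.uIcc 0 t) := by
      intro s' hs'
      rw [Set.uIcc_of_le ht] at hs'
      apply intervalIntegral.integral_congr
      intro η hη
      rw [Set.uIcc_of_le hξ0] at hη
      have hmem : ((s', η) : ℝ × ℝ) ∈ Set.Ici (0:ℝ) ×ˢ Set.Icc (0:ℝ) ξbar :=
        ⟨hs'.1, ⟨hη.1, hη.2.trans hξb⟩⟩
      simp only [hFU _ hmem, Function.uncurry]
    have heqV : Set.EqOn fV (fun s' : ℝ => ∫ η in (0:ℝ)..ξ, g (FV (s', η)))
        (Set.uIcc 0 t) := by
      intro s' hs'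
      rw [Set.uIcc_of_le ht] at hs'
      apply intervalIntegral.integral_congr
      intro η hη
      rw [Set.uIcc_of_le hξ0] at hη
      have hmem : ((s', η) : ℝ × ℝ) ∈ Set.Ici (0:ℝ) ×ˢ Set.Icc (0:ℝ) ξbar :=
        ⟨hs'.1, ⟨hη.1, hη.2.trans hξb⟩⟩
      simp only [hFV _ hmem, Function.uncurry]
    have hfUi : IntervalIntegrable fU volume 0 t :=
      (hFUint.continuousOn.congr heqU).intervalIntegrable
    have hfVi : IntervalIntegrable fV volume 0 t :=
      (hFVint.continuousOn.congr heqV).intervalIntegrable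
    -- splitting the difference
    have hsplit : asympT Ubar g U t ξ - asympT Ubar g V t ξ
        = (1 / 2) * ∫ s' in (0:ℝ)..t, (fU s' - fV s') := by
      rw [intervalIntegral.integral_sub hfUi hfVi]
      simp only [asympT, hfUdef, hfVdef]
      ring
    -- the dominating function
    set φ : ℝ → ℝ := fun s' => ξbar * L * N * Real.exp (L * ξbar * s') with hφdef
    have hφi : IntervalIntegrable φ volume 0 t := by
      apply Continuous.intervalIntegrable
      exact continuous_const.mul (Real.continuous_exp.comp (continuous_const.mul continuous_id))
    have hbound : ∀ s' ∈ Set.uIoc (0:ℝ) t, ‖fU s' - fV s'‖ ≤ φ s' := by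
      intro s' hs'
      rw [Set.uIoc_of_le ht] at hs'
      have hs'0 : (0:ℝ) ≤ s' := hs'.1.le
      -- slice continuity and integrability
      have hsliceU : ContinuousOn (fun η => g (U s' η)) (Set.Icc 0 ξbar) := by
        have h1 : ContinuousOn (fun η : ℝ => Function.uncurry U (s', η)) (Set.Icc 0 ξbar) :=
          hU.comp (Continuous.continuousOn (continuous_const.prodMk continuous_id))
            (fun η hη => ⟨hs'0, hη⟩)
        exact hgc.comp_continuousOn h1
      have hsliceV : ContinuousOn (fun η => g (V s' η)) (Set.Icc 0 ξbar) := by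
        have h1 : ContinuousOn (fun η : ℝ => Function.uncurry V (s', η)) (Set.Icc 0 ξbar) :=
          hV.comp (Continuous.continuousOn (continuous_const.prodMk continuous_id))
            (fun η hη => ⟨hs'0, hη⟩)
        exact hgc.comp_continuousOn h1
      have hsub : Set.uIcc (0:ℝ) ξ ⊆ Set.Icc 0 ξbar := by
        rw [Set.uIcc_of_le hξ0]
        exact Set.Icc_subset_Icc le_rfl hξb
      have hiU : IntervalIntegrable (fun η => g (U s' η)) volume 0 ξ :=
        (hsliceU.mono hsub).intervalIntegrable
      have hiV : IntervalIntegrable (fun η => g (V s' η)) volume 0 ξ :=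
        (hsliceV.mono hsub).intervalIntegrable
      have hdiff : fU s' - fV s' = ∫ η in (0:ℝ)..ξ, (g (U s' η) - g (V s' η)) := by
        rw [intervalIntegral.integral_sub hiU hiV]
      rw [hdiff]
      have hConst : ∀ η ∈ Set.uIoc (0:ℝ) ξ,
          ‖g (U s' η) - g (V s' η)‖ ≤ L * (Real.exp (L * ξbar * s') * N) := by
        intro η hη
        rw [Set.uIoc_of_le hξ0] at hη
        have hηmem : η ∈ Set.Icc (0:ℝ) ξbar := ⟨hη.1.le, hη.2.trans hξb⟩
        calc ‖g (U s' η) - g (V s' η)‖ = |g (U s' η) - g (V s' η)| := rfl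
          _ ≤ L * |U s' η - V s' η| := hg _ _
          _ ≤ L * (Real.exp (L * ξbar * s') * N) :=
              mul_le_mul_of_nonneg_left (key s' η hs'0 hηmem) hL.le
      have h1 : ‖∫ η in (0:ℝ)..ξ, (g (U s' η) - g (V s' η))‖
          ≤ L * (Real.exp (L * ξbar * s') * N) * |ξ - 0| :=
        intervalIntegral.norm_integral_le_of_norm_le_const hConst
      have h2 : L * (Real.exp (L * ξbar * s') * N) * |ξ - 0| ≤ φ s' := by
        have habs' : |ξ - 0| = ξ := by rw [sub_zero, abs_of_nonneg hξ0]
        rw [habs']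
        show L * (Real.exp (L * ξbar * s') * N) * ξ ≤ ξbar * L * N * Real.exp (L * ξbar * s')
        have hexp : 0 ≤ Real.exp (L * ξbar * s') := Real.exp_nonneg _
        nlinarith [mul_nonneg (mul_nonneg (mul_nonneg hL.le hN0) hexp) (sub_nonneg.2 hξb)]
      exact h1.trans h2
    -- integrate the bound
    have hint : ‖∫ s' in (0:ℝ)..t, (fU s' - fV s')‖ ≤ |∫ s' in (0:ℝ)..t, φ s'| := by
      apply intervalIntegral.norm_integral_le_abs_of_norm_le _ hφi
      exact (ae_restrict_iff' measurableSet_uIoc).2 (Filter.Eventually.of_forall hbound)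
    -- compute the integral of φ
    have hc : L * ξbar ≠ 0 := by positivity
    have hφval : ∫ s' in (0:ℝ)..t, φ s' = ξbar * L * N *
        ((L * ξbar)⁻¹ * (Real.exp (L * ξbar * t) - 1)) := by
      rw [hφdef]
      rw [intervalIntegral.integral_const_mul]
      congr 1
      have := intervalIntegral.integral_comp_mul_left (a := (0:ℝ)) (b := t)
        (fun x => Real.exp x) hc
      simp only [smul_eq_mul, mul_zero] at this
      rw [this, integral_exp]
      simp
    have hφval2 : ∫ s' in (0:ℝ)..t, φ s' = N * (Real.exp (L * ξbar * t) - 1) := by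
      rw [hφval]
      field_simp
    have hE1 : 1 ≤ Real.exp (L * ξbar * t) := by
      apply Real.one_le_exp
      positivity
    have habs : |∫ s' in (0:ℝ)..t, φ s'| = N * (Real.exp (L * ξbar * t) - 1) := by
      rw [hφval2, abs_of_nonneg]
      apply mul_nonneg hN0
      linarith
    -- assemble
    have hfinal : |asympT Ubar g U t ξ - asympT Ubar g V t ξ|
        ≤ (1 / 2) * (N * (Real.exp (L * ξbar * t) - 1)) := by
      rw [hsplit, abs_mul]
      have : |(1:ℝ) / 2| = 1 / 2 := by norm_num
      rw [this]
      apply mul_le_mul_of_nonneg_left _ (by norm_num : (0:ℝ) ≤ 1 / 2)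
      calc |∫ s' in (0:ℝ)..t, (fU s' - fV s')|
          ≤ |∫ s' in (0:ℝ)..t, φ s'| := hint
        _ = N * (Real.exp (L * ξbar * t) - 1) := habs
    have hEinv : Real.exp (-(L * ξbar * t)) = (Real.exp (L * ξbar * t))⁻¹ :=
      Real.exp_neg _
    have hEpos : 0 < Real.exp (L * ξbar * t) := Real.exp_pos _
    calc Real.exp (-(L * ξbar * t)) * |asympT Ubar g U t ξ - asympT Ubar g V t ξ|
        ≤ Real.exp (-(L * ξbar * t)) *
            ((1 / 2) * (N * (Real.exp (L * ξbar * t) - 1))) :=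
          mul_le_mul_of_nonneg_left hfinal (Real.exp_nonneg _)
      _ ≤ (1 / 2) * N := by
          rw [hEinv]
          rw [inv_mul_le_iff₀ hEpos]
          nlinarith
  -- conclude on the supremum
  apply Real.sSup_le
  · intro r hr
    obtain ⟨t, ξ, ht, hξ, rfl⟩ := hr
    exact main t ξ ht hξ
  · positivity
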